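/- Let X and Y be independent stationary processes over A = {0,...,n−1} and let Z be the running-key ciphertext Z_i = (X_i + Y_i) mod n. Then the conditional entropy rate of the plaintext given the ciphertext satisfies h(X|Z) ≥ h(X) + h(Y) − log₂ n. -/

import Mathlib

open MeasureTheory Filter Real

section Defs

variable {Ω : Type*} [MeasurableSpace Ω]

/-- The left shift on one-sided infinite sequences. -/
def seqShift {α : Type*} (s : ℕ → α) : ℕ → α := fun i => s (i + 1)

/-- The law of a process `X = X_1 X_2 ...`, i.e. the distribution of the random
sequence `(X_1, X_2, ...)` as a measure on `ℕ → α`. -/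
noncomputable def procLaw {α : Type*} [MeasurableSpace α] (μ : Measure Ω)
    (X : ℕ → Ω → α) : Measure (ℕ → α) := μ.map fun ω i => X i ω

/-- A process is stationary if its law is invariant under the left shift. -/
def Stationary {α : Type*} [MeasurableSpace α] (μ : Measure Ω) (X : ℕ → Ω → α) : Prop :=
  MeasurePreserving seqShift (procLaw μ X) (procLaw μ X)

/-- A process is stationary ergodic if the left shift is an ergodic (in particular
measure-preserving) transformation of its law. -/
def StationaryErgodic {α : Type*} [MeasurableSpace α] (μ : Measure Ω) (X : ℕ → Ω → α) : Prop :=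
  Ergodic seqShift (procLaw μ X)

/-- `P_X(u) = P(X_1 ... X_t = u)`, the probability that the first `t` letters of the
process equal the word `u`. -/
noncomputable def blockProb {α : Type*} (μ : Measure Ω) (X : ℕ → Ω → α) (t : ℕ)
    (u : Fin t → α) : ℝ :=
  (μ {ω | ∀ i : Fin t, X i ω = u i}).toReal

/-- The `m`-order Shannon entropy
`h_m(X) = -(1/(m+1)) ∑_{u ∈ A^{m+1}} P_X(u) log₂ P_X(u)`. -/
noncomputable def blockEnt {α : Type*} [Fintype α] (μ : Measure Ω) (X : ℕ → Ω → α)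
    (m : ℕ) : ℝ :=
  -(1 / ((m : ℝ) + 1)) *
    ∑ u : Fin (m + 1) → α, blockProb μ X (m + 1) u * logb 2 (blockProb μ X (m + 1) u)

/-- The `m`-order conditional Shannon entropy `h_m(X|Z) = h_m(X,Z) - h_m(Z)`,
where `(X,Z)` is the pair process. -/
noncomputable def condBlockEnt {α : Type*} [Fintype α] (μ : Measure Ω)
    (X Z : ℕ → Ω → α) (m : ℕ) : ℝ :=
  blockEnt μ (fun i ω => (X i ω, Z i ω)) m - blockEnt μ Z m

/-- The conditional probability `P(X_1...X_t = x | Z_1...Z_t = z)`. -/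
noncomputable def condProb {α : Type*} (μ : Measure Ω) (X Z : ℕ → Ω → α) (t : ℕ)
    (x z : Fin t → α) : ℝ :=
  (μ {ω | (∀ i : Fin t, X i ω = x i) ∧ ∀ i : Fin t, Z i ω = z i}).toReal /
    (μ {ω | ∀ i : Fin t, Z i ω = z i}).toReal

/-- The conditional probability `P(X_1...X_t ∈ Ψ | Z_1...Z_t = z)` of a set `Ψ` of words. -/
noncomputable def condProbSet {α : Type*} (μ : Measure Ω) (X Z : ℕ → Ω → α) (t : ℕ)
    (Ψ : Set (Fin t → α)) (z : Fin t → α) : ℝ :=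
  (μ {ω | (fun i : Fin t => X i ω) ∈ Ψ ∧ ∀ i : Fin t, Z i ω = z i}).toReal /
    (μ {ω | ∀ i : Fin t, Z i ω = z i}).toReal

/-- The set `Ψ(Z) = {x ∈ A^t : |-(1/t) log₂ P(X_1...X_t = x | Z_1...Z_t) - h(X|Z)| < ε/2}`
of high-probability decipherings, where `hXZ` denotes the conditional entropy rate `h(X|Z)`. -/
def Psi {α : Type*} (μ : Measure Ω) (X Z : ℕ → Ω → α) (hXZ ε : ℝ) (t : ℕ)
    (z : Fin t → α) : Set (Fin t → α) :=
  {x | |-(1 / (t : ℝ)) * logb 2 (condProb μ X Z t x z) - hXZ| < ε / 2}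

/-- The Shannon entropy `H(U) = -∑_u P(U = u) log₂ P(U = u)` of a finite-valued
random variable. -/
noncomputable def rvEnt {β : Type*} [Fintype β] (μ : Measure Ω) (U : Ω → β) : ℝ :=
  -∑ b : β, (μ (U ⁻¹' {b})).toReal * logb 2 (μ (U ⁻¹' {b})).toReal

/-- The conditional Shannon entropy `H(U|V) = H(U,V) - H(V)`. -/
noncomputable def rvCondEnt {β γ : Type*} [Fintype β] [Fintype γ] (μ : Measure Ω)
    (U : Ω → β) (V : Ω → γ) : ℝ :=
  rvEnt μ (fun ω => (U ω, V ω)) - rvEnt μ V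

/-- The binary entropy function `H_b(p) = -p log₂ p - (1-p) log₂ (1-p)`. -/
noncomputable def binEnt (p : ℝ) : ℝ := -(p * logb 2 p) - (1 - p) * logb 2 (1 - p)

end Defs


section Aux

variable {Ω : Type*} [MeasurableSpace Ω]

lemma blockProb_eq_preimage {α : Type*} (μ : Measure Ω) (X : ℕ → Ω → α) (t : ℕ)
    (u : Fin t → α) :
    blockProb μ X t u = (μ ((fun ω (i : Fin t) => X i ω) ⁻¹' {u})).toReal := by
  unfold blockProb
  congr 1
  apply congrArg
  ext ω
  simp [Set.mem_preimage, funext_iff, eq_comm]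

lemma blockProb_nonneg {α : Type*} (μ : Measure Ω) (X : ℕ → Ω → α) (t : ℕ)
    (u : Fin t → α) : 0 ≤ blockProb μ X t u := ENNReal.toReal_nonneg

lemma blockProb_sum_one {α : Type*} [Fintype α] [MeasurableSpace α]
    [MeasurableSingletonClass α] (μ : Measure Ω) [IsProbabilityMeasure μ]
    (X : ℕ → Ω → α) (hX : ∀ i, Measurable (X i)) (t : ℕ) :
    ∑ u : Fin t → α, blockProb μ X t u = 1 := by
  have hf : Measurable (fun ω (i : Fin t) => X i ω) :=
    measurable_pi_lambda _ (fun i => hX i)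
  have hsum : ∑ u : Fin t → α, μ ((fun ω (i : Fin t) => X i ω) ⁻¹' {u})
      = μ ((fun ω (i : Fin t) => X i ω) ⁻¹' (Finset.univ : Finset (Fin t → α))) := by
    exact sum_measure_preimage_singleton _ (fun u _ => hf (measurableSet_singleton u))
  simp only [blockProb_eq_preimage]
  rw [← ENNReal.toReal_sum (fun u _ => measure_ne_top μ _), hsum]
  simp

lemma sum_negMulLog_le {ι : Type*} [Fintype ι] [Nonempty ι] (p : ι → ℝ)
    (h0 : ∀ i, 0 ≤ p i) (h1 : ∑ i, p i = 1) :
    -∑ i, p i * logb 2 (p i) ≤ logb 2 (Fintype.card ι) := by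
  set N : ℝ := (Fintype.card ι : ℝ) with hN
  have hNpos : 0 < N := by positivity
  have jensen : ∑ i, (N⁻¹ : ℝ) • Real.negMulLog (p i)
      ≤ Real.negMulLog (∑ i, (N⁻¹ : ℝ) • p i) := by
    apply Real.concaveOn_negMulLog.le_map_sum
    · intro i _; positivity
    · rw [Finset.sum_const]
      simp only [nsmul_eq_mul, smul_eq_mul]
      rw [Finset.card_univ, ← hN]
      field_simp
    · intro i _; exact h0 i
  have hx : (∑ i, (N⁻¹ : ℝ) • p i) = N⁻¹ := by
    rw [← Finset.smul_sum, h1]; simp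
  rw [hx] at jensen
  have hv : Real.negMulLog (N⁻¹) = N⁻¹ * Real.log N := by
    rw [Real.negMulLog, Real.log_inv]; ring
  rw [hv, ← Finset.smul_sum] at jensen
  have h2 : ∑ i, Real.negMulLog (p i) ≤ Real.log N := by
    have := mul_le_mul_of_nonneg_left jensen (le_of_lt hNpos)
    simp only [smul_eq_mul] at this
    rwa [← mul_assoc, ← mul_assoc, mul_inv_cancel₀ (ne_of_gt hNpos), one_mul, one_mul] at this
  have key : -∑ i, p i * logb 2 (p i) = (∑ i, Real.negMulLog (p i)) / Real.log 2 := by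
    rw [Finset.sum_div, ← Finset.sum_neg_distrib]
    apply Finset.sum_congr rfl
    intro i _
    rw [Real.negMulLog, Real.logb]
    ring
  rw [key, Real.logb]
  gcongr

/-- The entropy bound: `h_m(Z) ≤ log₂ n`. -/
lemma blockEnt_le_logb {n : ℕ} [NeZero n] (μ : Measure Ω) [IsProbabilityMeasure μ]
    (Z : ℕ → Ω → ZMod n) (hZ : ∀ i, Measurable (Z i)) (m : ℕ) :
    blockEnt μ Z m ≤ logb 2 n := by
  have hcard : (Fintype.card (Fin (m + 1) → ZMod n) : ℝ) = (n : ℝ) ^ (m + 1) := by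
    simp [ZMod.card]
  have hb := sum_negMulLog_le (fun u => blockProb μ Z (m + 1) u)
    (fun u => blockProb_nonneg μ Z (m + 1) u) (blockProb_sum_one μ Z hZ (m + 1))
  rw [hcard] at hb
  have hlog : logb 2 ((n : ℝ) ^ (m + 1)) = ((m : ℝ) + 1) * logb 2 n := by
    rw [Real.logb_pow]; push_cast; ring
  rw [hlog] at hb
  have hm1 : (0 : ℝ) < (m : ℝ) + 1 := by positivity
  unfold blockEnt
  have : -(1 / ((m : ℝ) + 1)) * (∑ u : Fin (m + 1) → ZMod n,
      blockProb μ Z (m + 1) u * logb 2 (blockProb μ Z (m + 1) u))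
      = (-∑ u : Fin (m + 1) → ZMod n,
        blockProb μ Z (m + 1) u * logb 2 (blockProb μ Z (m + 1) u)) / ((m : ℝ) + 1) := by
    ring
  rw [this, div_le_iff₀ hm1]
  linarith [hb]

/-- Independence: the block probability of the pair process factorizes. -/
lemma blockProb_pair_mul {n : ℕ} [NeZero n] (μ : Measure Ω)
    (X Y : ℕ → Ω → ZMod n)
    (hindep : ProbabilityTheory.IndepFun (fun ω i => X i ω) (fun ω i => Y i ω) μ)
    (t : ℕ) (v : Fin t → ZMod n × ZMod n) :
    blockProb μ (fun i ω => (X i ω, Y i ω)) t v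
      = blockProb μ X t (fun i => (v i).1) * blockProb μ Y t (fun i => (v i).2) := by
  unfold blockProb
  set SA : Set (ℕ → ZMod n) := {s | ∀ i : Fin t, s i = (v i).1} with hSA
  set SB : Set (ℕ → ZMod n) := {s | ∀ i : Fin t, s i = (v i).2} with hSB
  have hSAm : MeasurableSet SA := by
    have : SA = ⋂ i : Fin t, (fun s : ℕ → ZMod n => s (i : ℕ)) ⁻¹' {(v i).1} := by
      ext s; simp [hSA]
    rw [this]
    exact MeasurableSet.iInter fun i => (measurable_pi_apply _) (measurableSet_singleton _)
  have hSBm : MeasurableSet SB := by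
    have : SB = ⋂ i : Fin t, (fun s : ℕ → ZMod n => s (i : ℕ)) ⁻¹' {(v i).2} := by
      ext s; simp [hSB]
    rw [this]
    exact MeasurableSet.iInter fun i => (measurable_pi_apply _) (measurableSet_singleton _)
  have hkey := hindep.measure_inter_preimage_eq_mul SA SB hSAm hSBm
  have hset : {ω | ∀ i : Fin t, (X i ω, Y i ω) = v i}
      = (fun ω (i : ℕ) => X i ω) ⁻¹' SA ∩ (fun ω (i : ℕ) => Y i ω) ⁻¹' SB := by
    ext ω
    simp only [Set.mem_setOf_eq, Set.mem_inter_iff, Set.mem_preimage, hSA, hSB,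
      Set.mem_setOf_eq, Prod.ext_iff]
    exact ⟨fun h => ⟨fun i => (h i).1, fun i => (h i).2⟩, fun h i => ⟨h.1 i, h.2 i⟩⟩
  rw [hset, hkey, ENNReal.toReal_mul]
  rfl

/-- The pair process `(X, Z)` and `(X, Y)` are block-wise related by a bijection. -/
lemma blockProb_XZ_eq {n : ℕ} [NeZero n] (μ : Measure Ω)
    (X Y Z : ℕ → Ω → ZMod n) (hZdef : ∀ i ω, Z i ω = X i ω + Y i ω)
    (t : ℕ) (v : Fin t → ZMod n × ZMod n) :
    blockProb μ (fun i ω => (X i ω, Z i ω)) t v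
      = blockProb μ (fun i ω => (X i ω, Y i ω)) t (fun i => ((v i).1, (v i).2 - (v i).1)) := by
  unfold blockProb
  congr 1
  apply congrArg
  ext ω
  simp only [Set.mem_setOf_eq, Prod.ext_iff]
  constructor
  · intro h i
    obtain ⟨h1, h2⟩ := h i
    refine ⟨h1, ?_⟩
    rw [hZdef] at h2
    rw [← h2, h1]; ring
  · intro h i
    obtain ⟨h1, h2⟩ := h i
    refine ⟨h1, ?_⟩
    rw [hZdef, h1, h2]; ring

/-- `h_m(X,Z) = h_m(X,Y)` via the bijection `(a,b) ↦ (a, b - a)`. -/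
lemma blockEnt_XZ_eq {n : ℕ} [NeZero n] (μ : Measure Ω)
    (X Y Z : ℕ → Ω → ZMod n) (hZdef : ∀ i ω, Z i ω = X i ω + Y i ω) (m : ℕ) :
    blockEnt μ (fun i ω => (X i ω, Z i ω)) m = blockEnt μ (fun i ω => (X i ω, Y i ω)) m := by
  unfold blockEnt
  congr 1
  let e : (ZMod n × ZMod n) ≃ (ZMod n × ZMod n) :=
    ⟨fun p => (p.1, p.2 - p.1), fun p => (p.1, p.2 + p.1),
     fun p => by simp, fun p => by simp⟩
  let Φ : (Fin (m + 1) → ZMod n × ZMod n) ≃ (Fin (m + 1) → ZMod n × ZMod n) :=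
    Equiv.piCongrRight (fun _ => e)
  have key : ∀ v, blockProb μ (fun i ω => (X i ω, Z i ω)) (m + 1) v
      = blockProb μ (fun i ω => (X i ω, Y i ω)) (m + 1) (Φ v) := by
    intro v
    exact blockProb_XZ_eq μ X Y Z hZdef (m + 1) v
  calc ∑ u : Fin (m + 1) → ZMod n × ZMod n,
        blockProb μ (fun i ω => (X i ω, Z i ω)) (m + 1) u
          * logb 2 (blockProb μ (fun i ω => (X i ω, Z i ω)) (m + 1) u)
      = ∑ u : Fin (m + 1) → ZMod n × ZMod n,
        blockProb μ (fun i ω => (X i ω, Y i ω)) (m + 1) (Φ u)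
          * logb 2 (blockProb μ (fun i ω => (X i ω, Y i ω)) (m + 1) (Φ u)) := by
        apply Finset.sum_congr rfl; intro u _; rw [key]
    _ = _ := Equiv.sum_comp Φ (fun u =>
        blockProb μ (fun i ω => (X i ω, Y i ω)) (m + 1) u
          * logb 2 (blockProb μ (fun i ω => (X i ω, Y i ω)) (m + 1) u))

/-- Additivity of block entropy for independent processes. -/
lemma blockEnt_pair_add {n : ℕ} [NeZero n] (μ : Measure Ω) [IsProbabilityMeasure μ]
    (X Y : ℕ → Ω → ZMod n)
    (hXmeas : ∀ i, Measurable (X i)) (hYmeas : ∀ i, Measurable (Y i))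
    (hindep : ProbabilityTheory.IndepFun (fun ω i => X i ω) (fun ω i => Y i ω) μ)
    (m : ℕ) :
    blockEnt μ (fun i ω => (X i ω, Y i ω)) m = blockEnt μ X m + blockEnt μ Y m := by
  unfold blockEnt
  rw [← mul_add]
  congr 1
  set t := m + 1
  set pX : (Fin t → ZMod n) → ℝ := fun x => blockProb μ X t x with hpX
  set pY : (Fin t → ZMod n) → ℝ := fun y => blockProb μ Y t y with hpY
  let Ψ : (Fin t → ZMod n × ZMod n) ≃ (Fin t → ZMod n) × (Fin t → ZMod n) :=
    Equiv.arrowProdEquivProdArrow _ _ _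
  have hfac : ∀ v : Fin t → ZMod n × ZMod n,
      blockProb μ (fun i ω => (X i ω, Y i ω)) t v = pX (fun i => (v i).1) * pY (fun i => (v i).2) :=
    fun v => blockProb_pair_mul μ X Y hindep t v
  have step1 : ∑ u : Fin t → ZMod n × ZMod n,
      blockProb μ (fun i ω => (X i ω, Y i ω)) t u
        * logb 2 (blockProb μ (fun i ω => (X i ω, Y i ω)) t u)
      = ∑ x : Fin t → ZMod n, ∑ y : Fin t → ZMod n,
          (pX x * pY y) * logb 2 (pX x * pY y) := by
    rw [← Equiv.sum_comp Ψ.symm (fun u =>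
      blockProb μ (fun i ω => (X i ω, Y i ω)) t u
        * logb 2 (blockProb μ (fun i ω => (X i ω, Y i ω)) t u)), Fintype.sum_prod_type]
    apply Finset.sum_congr rfl; intro x _
    apply Finset.sum_congr rfl; intro y _
    have : Ψ.symm (x, y) = fun i => (x i, y i) := rfl
    rw [this, hfac]
  have term : ∀ (a b : ℝ), 0 ≤ a → 0 ≤ b →
      (a * b) * logb 2 (a * b) = b * (a * logb 2 a) + a * (b * logb 2 b) := by
    intro a b ha hb
    rcases eq_or_lt_of_le ha with h | h
    · simp [← h]
    rcases eq_or_lt_of_le hb with h' | h'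
    · simp [← h']
    rw [Real.logb_mul (ne_of_gt h) (ne_of_gt h')]
    ring
  have step2 : ∑ x : Fin t → ZMod n, ∑ y : Fin t → ZMod n,
      (pX x * pY y) * logb 2 (pX x * pY y)
      = (∑ x : Fin t → ZMod n, pX x * logb 2 (pX x))
        + (∑ y : Fin t → ZMod n, pY y * logb 2 (pY y)) := by
    have : ∑ x : Fin t → ZMod n, ∑ y : Fin t → ZMod n,
        (pX x * pY y) * logb 2 (pX x * pY y)
        = ∑ x : Fin t → ZMod n, ∑ y : Fin t → ZMod n,
          (pY y * (pX x * logb 2 (pX x)) + pX x * (pY y * logb 2 (pY y))) := by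
      apply Finset.sum_congr rfl; intro x _
      apply Finset.sum_congr rfl; intro y _
      exact term _ _ (blockProb_nonneg μ X t x) (blockProb_nonneg μ Y t y)
    rw [this]
    have hX1 : ∑ x : Fin t → ZMod n, pX x = 1 := blockProb_sum_one μ X hXmeas t
    have hY1 : ∑ y : Fin t → ZMod n, pY y = 1 := blockProb_sum_one μ Y hYmeas t
    simp only [Finset.sum_add_distrib]
    rw [Finset.sum_comm (f := fun x y => pY y * (pX x * logb 2 (pX x)))]
    simp only [← Finset.sum_mul, ← Finset.mul_sum]
    rw [hY1, hX1]
    ring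
  rw [step1, step2]

end Aux


/-- For the running-key cipher with independent stationary plaintext `X`
and key `Y` over an `n`-letter alphabet, `h(X|Z) ≥ h(X) + h(Y) - log₂ n`. -/
theorem cond_entropy_rate_plaintext_given_ciphertext
    {Ω : Type*} [MeasurableSpace Ω] (μ : Measure Ω) [IsProbabilityMeasure μ]
    {n : ℕ} [NeZero n] (hn : 2 ≤ n)
    (X Y Z : ℕ → Ω → ZMod n)
    (hXmeas : ∀ i, Measurable (X i)) (hYmeas : ∀ i, Measurable (Y i))
    (hXstat : Stationary μ X) (hYstat : Stationary μ Y)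
    (hindep : ProbabilityTheory.IndepFun (fun ω i => X i ω) (fun ω i => Y i ω) μ)
    (hZdef : ∀ i ω, Z i ω = X i ω + Y i ω)
    (hX hY hXgZ : ℝ)
    (hXrate : Tendsto (fun m => blockEnt μ X m) atTop (nhds hX))
    (hYrate : Tendsto (fun m => blockEnt μ Y m) atTop (nhds hY))
    (hXgZrate : Tendsto (fun m => condBlockEnt μ X Z m) atTop (nhds hXgZ)) :
    hXgZ ≥ hX + hY - logb 2 n := by
  have hZmeas : ∀ i, Measurable (Z i) := by
    intro i
    have : Z i = fun ω => X i ω + Y i ω := funext (hZdef i)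
    rw [this]
    exact (hXmeas i).add (hYmeas i)
  have key : ∀ m, blockEnt μ X m + blockEnt μ Y m - logb 2 n ≤ condBlockEnt μ X Z m := by
    intro m
    have h1 : blockEnt μ (fun i ω => (X i ω, Z i ω)) m
        = blockEnt μ X m + blockEnt μ Y m := by
      rw [blockEnt_XZ_eq μ X Y Z hZdef m,
        blockEnt_pair_add μ X Y hXmeas hYmeas hindep m]
    have h2 : blockEnt μ Z m ≤ logb 2 n := blockEnt_le_logb μ Z hZmeas m
    unfold condBlockEnt
    rw [h1]
    linarith
  exact le_of_tendsto_of_tendsto'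
    ((hXrate.add hYrate).sub tendsto_const_nhds) hXgZrate key
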